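/- Let E ∈ Mₙ(A) be an idempotent matrix, let M := Aⁿ·E be the image of right multiplication by E on the left A-module Aⁿ of row vectors, and let ρ be an A-module that is finite-dimensional as a k-vector space. Then the space Hom_A(M, ρ) of A-module homomorphisms is finite-dimensional over k, and its dimension, viewed as an element of k, equals Σ_{i=1}^{n} tr_k(E_ii : ρ → ρ), the sum of the traces of the k-linear operators by which the diagonal entries E_ii act on ρ. -/

import Mathlib

/-- The image `Aⁿ·E` of right multiplication by a matrix `E` on the left `A`-module of row
vectors, as a submodule of `Fin n → A`. -/
def rowImage {A : Type*} [Ring A] {n : ℕ} (E : Matrix (Fin n) (Fin n) A) :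
    Submodule A (Fin n → A) where
  carrier := {x | ∃ y : Fin n → A, Matrix.vecMul y E = x}
  add_mem' := by rintro a b ⟨y, rfl⟩ ⟨z, rfl⟩; exact ⟨y + z, Matrix.add_vecMul E y z⟩
  zero_mem' := ⟨0, Matrix.zero_vecMul E⟩
  smul_mem' := by rintro r a ⟨y, rfl⟩; exact ⟨r • y, Matrix.smul_vecMul r y E⟩

/-- The `k`-linear endomorphism of an `A`-module `ρ` given by the action of an element
`a ∈ A`, where `A` is a `k`-algebra. -/
def actionMap {k : Type*} [Field k] {A : Type*} [Ring A] [Algebra k A]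
    {ρ : Type*} [AddCommGroup ρ] [Module A ρ] [Module k ρ] [IsScalarTower k A ρ]
    (a : A) : ρ →ₗ[k] ρ where
  toFun x := a • x
  map_add' := smul_add a
  map_smul' c x := by simp [smul_comm a c x]

section Aux

variable (k : Type*) [Field k] {A : Type*} [Ring A] [Algebra k A]
    {n : ℕ} (E : Matrix (Fin n) (Fin n) A)
    {ρ : Type*} [AddCommGroup ρ] [Module A ρ] [Module k ρ] [IsScalarTower k A ρ]

/-- The k-linear operator on ρⁿ given by multiplication by E. -/
def matMul : (Fin n → ρ) →ₗ[k] (Fin n → ρ) :=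
  LinearMap.pi fun i => ∑ j, (actionMap (E i j)).comp (LinearMap.proj j)

lemma matMul_apply (v : Fin n → ρ) (i : Fin n) :
    matMul k E v i = ∑ j, E i j • v j := by
  simp [matMul, actionMap, LinearMap.pi_apply, LinearMap.sum_apply]

lemma rowMem (i : Fin n) : E i ∈ rowImage E := by
  refine ⟨Pi.single i 1, funext fun j => ?_⟩
  simp [Matrix.vecMul, dotProduct, Pi.single_apply, Finset.sum_ite_eq]

/-- The evaluation map from ρⁿ to Hom_A(rowImage E, ρ). -/
def toHom : (Fin n → ρ) →ₗ[k] (rowImage E →ₗ[A] ρ) where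
  toFun v :=
    { toFun := fun x => ∑ j, x.1 j • v j
      map_add' := by
        rintro ⟨x, hx⟩ ⟨y, hy⟩
        simp [add_smul, Finset.sum_add_distrib]
      map_smul' := by
        rintro a ⟨x, hx⟩
        simp only [SetLike.mk_smul_mk, Pi.smul_apply, smul_eq_mul, RingHom.id_apply,
          Finset.smul_sum, mul_smul] }
  map_add' u v := by
    ext x
    simp [smul_add, Finset.sum_add_distrib]
  map_smul' c v := by
    ext x
    simp only [LinearMap.coe_mk, AddHom.coe_mk, RingHom.id_apply, LinearMap.smul_apply,
      Pi.smul_apply, Finset.smul_sum]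
    exact Finset.sum_congr rfl fun j _ => (smul_comm c (x.1 j) (v j)).symm

lemma vecMul_self {x : Fin n → A} (hE : E * E = E) (hx : x ∈ rowImage E) :
    Matrix.vecMul x E = x := by
  obtain ⟨y, rfl⟩ := hx
  rw [Matrix.vecMul_vecMul, hE]

lemma sum_smul_row (hE : E * E = E) (i : Fin n) :
    (∑ j, E i j • (⟨E j, rowMem E j⟩ : rowImage E)) = ⟨E i, rowMem E i⟩ := by
  ext l
  rw [AddSubmonoidClass.coe_finset_sum]
  have := congrFun (congrFun hE i) l
  simpa [Matrix.mul_apply] using this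

lemma trace_matMul [FiniteDimensional k ρ] :
    LinearMap.trace k (Fin n → ρ) (matMul k E)
      = ∑ i, LinearMap.trace k ρ (actionMap (E i i)) := by
  classical
  let b := Module.finBasis k ρ
  let B := Pi.basis (fun _ : Fin n => b)
  rw [LinearMap.trace_eq_matrix_trace k B, Matrix.trace,
    ← Finset.univ_sigma_univ, Finset.sum_sigma]
  refine Finset.sum_congr rfl fun i _ => ?_
  rw [LinearMap.trace_eq_matrix_trace k b, Matrix.trace]
  refine Finset.sum_congr rfl fun s _ => ?_
  simp only [Matrix.diag_apply, LinearMap.toMatrix_apply, Pi.basis_repr, Pi.basis_apply, B]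
  congr 1
  rw [matMul_apply, Finset.sum_eq_single i]
  · simp [actionMap]
  · intro j _ hj
    rw [Pi.single_eq_of_ne hj, smul_zero]
  · simp

end Aux

/-- Let `E ∈ Mₙ(A)` be an idempotent matrix over a `k`-algebra `A`, `M = Aⁿ·E` the image of
right multiplication by `E` on row vectors, and `ρ` an `A`-module finite-dimensional over
`k`. Then `Hom_A(M, ρ)` is finite-dimensional over `k` and its dimension, as an element of
`k`, equals `Σ_i tr_k(E_ii : ρ → ρ)`. -/
theorem stmt_11 {k : Type*} [Field k] {A : Type*} [Ring A] [Algebra k A]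
    {n : ℕ} (E : Matrix (Fin n) (Fin n) A) (hE : E * E = E)
    {ρ : Type*} [AddCommGroup ρ] [Module A ρ] [Module k ρ] [IsScalarTower k A ρ]
    [FiniteDimensional k ρ] :
    FiniteDimensional k (rowImage E →ₗ[A] ρ) ∧
    (Module.finrank k (rowImage E →ₗ[A] ρ) : k) =
      ∑ i, LinearMap.trace k ρ (actionMap (E i i)) := by
  set T : (Fin n → ρ) →ₗ[k] (Fin n → ρ) := matMul k E with hT
  -- T is idempotent
  have hTT : ∀ v, T (T v) = T v := by
    intro v
    funext i
    simp only [matMul_apply, hT]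
    simp_rw [Finset.smul_sum, smul_smul]
    rw [Finset.sum_comm]
    simp_rw [← Finset.sum_smul]
    refine Finset.sum_congr rfl fun j _ => ?_
    congr 1
    have := congrFun (congrFun hE i) j
    simpa [Matrix.mul_apply] using this
  -- fixed points of T = range T
  have hfix : ∀ v ∈ LinearMap.range T, T v = v := by
    rintro v ⟨w, rfl⟩; exact hTT w
  have hproj : LinearMap.IsProj (LinearMap.range T) T :=
    ⟨fun x => LinearMap.mem_range_self T x, hfix⟩
  -- the evaluation-at-rows map, Hom → ρⁿ
  let Ψ : (rowImage E →ₗ[A] ρ) →ₗ[k] (Fin n → ρ) :=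
    { toFun := fun φ i => φ ⟨E i, rowMem E i⟩
      map_add' := fun φ ψ => rfl
      map_smul' := fun c φ => rfl }
  have hΨfix : ∀ φ : rowImage E →ₗ[A] ρ, T (Ψ φ) = Ψ φ := by
    intro φ
    funext i
    rw [hT, matMul_apply]
    show ∑ j, E i j • φ ⟨E j, rowMem E j⟩ = φ ⟨E i, rowMem E i⟩
    rw [← sum_smul_row E hE i, map_sum]
    exact Finset.sum_congr rfl fun j _ => (map_smul φ _ _).symm
  have hΨmem : ∀ φ, Ψ φ ∈ LinearMap.range T := fun φ => ⟨Ψ φ, hΨfix φ⟩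
  let e : (rowImage E →ₗ[A] ρ) ≃ₗ[k] LinearMap.range T :=
    LinearEquiv.ofLinear (Ψ.codRestrict _ hΨmem)
      ((toHom k E).comp (LinearMap.range T).subtype)
      (by
        ext ⟨v, hv⟩ i
        show ∑ j, E i j • v j = v i
        have := congrFun (hfix v hv) i
        rwa [matMul_apply] at this)
      (by
        ext φ x
        show ∑ j, x.1 j • φ ⟨E j, rowMem E j⟩ = φ x
        have hx : (∑ j, x.1 j • (⟨E j, rowMem E j⟩ : rowImage E)) = x := by
          ext l
          rw [AddSubmonoidClass.coe_finset_sum]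
          have := congrFun (vecMul_self E hE x.2) l
          simpa [Matrix.vecMul, dotProduct] using this
        conv_rhs => rw [← hx]
        rw [map_sum]
        exact Finset.sum_congr rfl fun j _ => (map_smul φ _ _).symm)
  have hfd : FiniteDimensional k (rowImage E →ₗ[A] ρ) :=
    Module.Finite.equiv e.symm
  refine ⟨hfd, ?_⟩
  rw [e.finrank_eq]
  rw [← hproj.trace, hT, trace_matMul]
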